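/- Let $T_n$ denote the Chebyshev polynomial of the first kind of degree $n \ge 1$. Then the function $\mathcal{P}(z) = 1 / T_n(1/z)$ is the probability generating function of some random variable taking values in the positive integers: its power series expansion around $0$ has nonnegative coefficients, converges for $|z| \le 1$, and satisfies $\mathcal{P}(1) = 1$. -/

import Mathlib

open Polynomial Polynomial.Chebyshev Finset

namespace Stmt2Aux

/-- One step of the simple random walk on `ℤ` killed outside `|j| ≤ n-1`. -/
noncomputable def step (n : ℕ) (f : ℤ → ℝ) : ℤ → ℝ :=
  fun j => if |j| ≤ (n : ℤ) - 1 then (f (j - 1) + f (j + 1)) / 2 else 0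

/-- Distribution of the killed walk after `m` steps, started at `0`. -/
noncomputable def p (n : ℕ) : ℕ → ℤ → ℝ
  | 0 => fun j => if j = 0 then 1 else 0
  | m + 1 => step n (p n m)

/-- `c n m` = probability that the walk exits `(-n, n)` exactly at time `m`. -/
noncomputable def c (n : ℕ) : ℕ → ℝ
  | 0 => 0
  | m + 1 => (p n m ((n : ℤ) - 1) + p n m (1 - (n : ℤ))) / 2

lemma step_nonneg (n : ℕ) {f : ℤ → ℝ} (hf : ∀ j, 0 ≤ f j) (j : ℤ) : 0 ≤ step n f j := by
  unfold step
  split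
  · have h1 := hf (j - 1); have h2 := hf (j + 1); linarith
  · exact le_refl 0

lemma p_nonneg (n : ℕ) : ∀ m j, 0 ≤ p n m j := by
  intro m
  induction m with
  | zero => intro j; simp only [p]; split <;> norm_num
  | succ m ih => intro j; exact step_nonneg n ih j

lemma c_nonneg (n : ℕ) : ∀ i, 0 ≤ c n i := by
  intro i
  cases i with
  | zero => simp [c]
  | succ m =>
    have h1 := p_nonneg n m ((n : ℤ) - 1)
    have h2 := p_nonneg n m (1 - (n : ℤ))
    simp only [c]; linarith

lemma p_outside (n : ℕ) (hn : 1 ≤ n) : ∀ m j, ¬ (|j| ≤ (n : ℤ) - 1) → p n m j = 0 := by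
  intro m j hj
  cases m with
  | zero =>
    simp only [p]
    split
    · exfalso; subst ‹j = 0›; apply hj; simp; omega
    · rfl
  | succ m => simp only [p, step, if_neg hj]


noncomputable def lam (n : ℕ) : ℝ := Real.cos (Real.pi / (2 * n))

noncomputable def w (n : ℕ) (j : ℤ) : ℝ :=
  if |j| ≤ (n : ℤ) then Real.cos (j * (Real.pi / (2 * n))) else 0

lemma angle_nonneg (n : ℕ) (hn : 1 ≤ n) : 0 ≤ Real.pi / (2 * n) := by
  have := Real.pi_pos
  positivity

lemma angle_le (n : ℕ) (hn : 1 ≤ n) : Real.pi / (2 * n) ≤ Real.pi / 2 := by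
  have hpi := Real.pi_pos
  have h2 : (2 : ℝ) ≤ 2 * n := by
    have : (1 : ℝ) ≤ n := by exact_mod_cast hn
    linarith
  gcongr

lemma lam_nonneg (n : ℕ) (hn : 1 ≤ n) : 0 ≤ lam n :=
  Real.cos_nonneg_of_mem_Icc ⟨by linarith [angle_nonneg n hn, Real.pi_pos], angle_le n hn⟩

lemma lam_lt_one (n : ℕ) (hn : 1 ≤ n) : lam n < 1 := by
  have hpi := Real.pi_pos
  have hpos : 0 < Real.pi / (2 * n) := by
    have : (0:ℝ) < n := by exact_mod_cast hn
    positivity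
  have := Real.cos_lt_cos_of_nonneg_of_le_pi (le_refl 0)
    (by linarith [angle_le n hn]) hpos
  simpa [lam] using this

lemma w_nonneg (n : ℕ) (hn : 1 ≤ n) (j : ℤ) : 0 ≤ w n j := by
  unfold w
  split
  · rename_i h
    apply Real.cos_nonneg_of_mem_Icc
    have hja : |(j : ℝ)| ≤ (n : ℝ) := by
      rw [← Int.cast_abs]
      exact_mod_cast h
    have ha := angle_nonneg n hn
    have hkey : |(j : ℝ) * (Real.pi / (2 * n))| ≤ Real.pi / 2 := by
      rw [abs_mul, abs_of_nonneg ha]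
      calc |(j : ℝ)| * (Real.pi / (2 * n)) ≤ (n : ℝ) * (Real.pi / (2 * n)) := by
            apply mul_le_mul_of_nonneg_right hja ha
        _ = Real.pi / 2 := by
            have hnz : (n : ℝ) ≠ 0 := by positivity
            field_simp
    constructor
    · linarith [neg_abs_le ((j : ℝ) * (Real.pi / (2 * n))), abs_le.mp hkey]
    · linarith [le_abs_self ((j : ℝ) * (Real.pi / (2 * n))), abs_le.mp hkey]
  · exact le_refl 0

lemma w_le_one (n : ℕ) (j : ℤ) : w n j ≤ 1 := by
  unfold w
  split
  · exact Real.cos_le_one _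
  · norm_num

lemma step_mono (n : ℕ) {f g : ℤ → ℝ} (h : ∀ j, f j ≤ g j) (j : ℤ) :
    step n f j ≤ step n g j := by
  unfold step
  split
  · have h1 := h (j - 1); have h2 := h (j + 1); linarith
  · exact le_refl 0

lemma step_const_mul (n : ℕ) (a : ℝ) (f : ℤ → ℝ) (j : ℤ) :
    step n (fun i => a * f i) j = a * step n f j := by
  unfold step
  split
  · ring
  · ring

lemma step_w (n : ℕ) (hn : 1 ≤ n) (j : ℤ) : step n (w n) j ≤ lam n * w n j := by
  unfold step
  split
  · rename_i h
    have h' := abs_le.mp h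
    have hm1 : |j - 1| ≤ (n : ℤ) := abs_le.mpr (by omega)
    have hp1 : |j + 1| ≤ (n : ℤ) := abs_le.mpr (by omega)
    have h0 : |j| ≤ (n : ℤ) := abs_le.mpr (by omega)
    set a := Real.pi / (2 * n) with ha
    have e1 : w n (j - 1) = Real.cos ((j : ℝ) * a - a) := by
      rw [w, if_pos hm1]; congr 1; push_cast; ring
    have e2 : w n (j + 1) = Real.cos ((j : ℝ) * a + a) := by
      rw [w, if_pos hp1]; congr 1; push_cast; ring
    have e0 : w n j = Real.cos ((j : ℝ) * a) := by rw [w, if_pos h0]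
    rw [e1, e2, e0]
    have hc1 := Real.cos_sub ((j : ℝ) * a) a
    have hc2 := Real.cos_add ((j : ℝ) * a) a
    have : (Real.cos ((j : ℝ) * a - a) + Real.cos ((j : ℝ) * a + a)) / 2
        = Real.cos a * Real.cos ((j : ℝ) * a) := by rw [hc1, hc2]; ring
    rw [this]
    exact le_of_eq rfl
  · exact mul_nonneg (lam_nonneg n hn) (w_nonneg n hn j)

lemma p_le_w (n : ℕ) (hn : 1 ≤ n) : ∀ m j, p n m j ≤ lam n ^ m * w n j := by
  intro m
  induction m with
  | zero =>
    intro j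
    simp only [p, pow_zero, one_mul]
    split
    · rename_i hj
      subst hj
      have h0 : |(0 : ℤ)| ≤ (n : ℤ) := by simp
      rw [w, if_pos h0]
      simp
    · exact w_nonneg n hn j
  | succ m ih =>
    intro j
    have h1 : p n (m + 1) j ≤ step n (fun i => lam n ^ m * w n i) j := by
      show step n (p n m) j ≤ _
      exact step_mono n ih j
    have h2 : step n (fun i => lam n ^ m * w n i) j = lam n ^ m * step n (w n) j :=
      step_const_mul n _ _ j
    have h3 : lam n ^ m * step n (w n) j ≤ lam n ^ m * (lam n * w n j) :=
      mul_le_mul_of_nonneg_left (step_w n hn j) (pow_nonneg (lam_nonneg n hn) m)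
    calc p n (m + 1) j ≤ lam n ^ m * step n (w n) j := h2 ▸ h1
      _ ≤ lam n ^ m * (lam n * w n j) := h3
      _ = lam n ^ (m + 1) * w n j := by ring

lemma p_le_pow (n : ℕ) (hn : 1 ≤ n) (m : ℕ) (j : ℤ) : p n m j ≤ lam n ^ m := by
  calc p n m j ≤ lam n ^ m * w n j := p_le_w n hn m j
    _ ≤ lam n ^ m * 1 :=
      mul_le_mul_of_nonneg_left (w_le_one n j) (pow_nonneg (lam_nonneg n hn) m)
    _ = lam n ^ m := mul_one _


/-- The box of interior states. -/
noncomputable def B (n : ℕ) : Finset ℤ := Icc (1 - (n : ℤ)) ((n : ℤ) - 1)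

lemma mem_B {n : ℕ} {j : ℤ} : j ∈ B n ↔ |j| ≤ (n : ℤ) - 1 := by
  simp only [B, Finset.mem_Icc, abs_le]
  omega

/-- Evaluated Chebyshev polynomials. -/
noncomputable def g (z : ℝ) (j : ℤ) : ℝ := (T ℝ j).eval (1 / z)

lemma g_rec (z : ℝ) (j : ℤ) : g z (j + 1) + g z (j - 1) = 2 * (1 / z) * g z j := by
  have h := T_add_two ℝ (j - 1)
  have e : j - 1 + 2 = j + 1 := by ring
  rw [e] at h
  unfold g
  rw [h]
  rw [show j - 1 + 1 = j by ring]
  simp only [eval_sub, eval_mul, eval_ofNat, eval_X]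
  ring

lemma g_neg (z : ℝ) (j : ℤ) : g z (-j) = g z j := by
  unfold g
  rw [T_neg]

lemma sum_shift (f : ℤ → ℝ) (a b : ℤ) :
    ∑ j ∈ Icc a b, f j = ∑ i ∈ Icc (a - 1) (b - 1), f (i + 1) := by
  have h : Icc a b = (Icc (a - 1) (b - 1)).map (addRightEmbedding 1) := by
    rw [Finset.map_add_right_Icc]
    congr 1 <;> ring
  rw [h, Finset.sum_map]
  rfl

lemma sum_shift' (f : ℤ → ℝ) (a b : ℤ) :
    ∑ j ∈ Icc a b, f j = ∑ i ∈ Icc (a + 1) (b + 1), f (i - 1) := by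
  have h : Icc (a + 1) (b + 1) = (Icc a b).map (addRightEmbedding 1) := by
    rw [Finset.map_add_right_Icc]
  rw [h, Finset.sum_map]
  simp [addRightEmbedding]

lemma sum_boundary (n : ℕ) (hn : 1 ≤ n) (h : ℤ → ℝ) :
    ∑ i ∈ Icc (-(n : ℤ)) ((n : ℤ) - 2), h i
      = ∑ i ∈ B n, h i + h (-(n : ℤ)) - h ((n : ℤ) - 1) := by
  have hn' : (1 : ℤ) ≤ (n : ℤ) := by exact_mod_cast hn
  have h1 : Icc (-(n : ℤ)) ((n : ℤ) - 1) = insert (-(n : ℤ)) (B n) := by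
    ext x
    simp only [B, Finset.mem_Icc, Finset.mem_insert]
    omega
  have h2 : Icc (-(n : ℤ)) ((n : ℤ) - 1)
      = insert ((n : ℤ) - 1) (Icc (-(n : ℤ)) ((n : ℤ) - 2)) := by
    ext x
    simp only [Finset.mem_Icc, Finset.mem_insert]
    omega
  have m1 : (-(n : ℤ)) ∉ B n := by
    simp only [B, Finset.mem_Icc]
    omega
  have m2 : ((n : ℤ) - 1) ∉ Icc (-(n : ℤ)) ((n : ℤ) - 2) := by
    simp only [Finset.mem_Icc]
    omega
  have e1 : h (-(n : ℤ)) + ∑ i ∈ B n, h i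
      = h ((n : ℤ) - 1) + ∑ i ∈ Icc (-(n : ℤ)) ((n : ℤ) - 2), h i := by
    rw [← Finset.sum_insert m1, ← Finset.sum_insert m2, ← h1, ← h2]
  linarith

lemma sum_boundary' (n : ℕ) (hn : 1 ≤ n) (h : ℤ → ℝ) :
    ∑ i ∈ Icc (2 - (n : ℤ)) (n : ℤ), h i
      = ∑ i ∈ B n, h i + h (n : ℤ) - h (1 - (n : ℤ)) := by
  have hn' : (1 : ℤ) ≤ (n : ℤ) := by exact_mod_cast hn
  have h1 : Icc (1 - (n : ℤ)) (n : ℤ) = insert (n : ℤ) (B n) := by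
    ext x
    simp only [B, Finset.mem_Icc, Finset.mem_insert]
    omega
  have h2 : Icc (1 - (n : ℤ)) (n : ℤ)
      = insert (1 - (n : ℤ)) (Icc (2 - (n : ℤ)) (n : ℤ)) := by
    ext x
    simp only [Finset.mem_Icc, Finset.mem_insert]
    omega
  have m1 : ((n : ℤ)) ∉ B n := by
    simp only [B, Finset.mem_Icc]
    omega
  have m2 : (1 - (n : ℤ)) ∉ Icc (2 - (n : ℤ)) (n : ℤ) := by
    simp only [Finset.mem_Icc]
    omega
  have e1 : h (n : ℤ) + ∑ i ∈ B n, h i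
      = h (1 - (n : ℤ)) + ∑ i ∈ Icc (2 - (n : ℤ)) (n : ℤ), h i := by
    rw [← Finset.sum_insert m1, ← Finset.sum_insert m2, ← h1, ← h2]
  linarith


lemma p_at_n (n : ℕ) (hn : 1 ≤ n) (M : ℕ) : p n M (n : ℤ) = 0 := by
  apply p_outside n hn
  rw [abs_of_nonneg (by positivity : (0:ℤ) ≤ (n:ℤ))]
  omega

lemma p_at_negn (n : ℕ) (hn : 1 ≤ n) (M : ℕ) : p n M (-(n : ℤ)) = 0 := by
  apply p_outside n hn
  rw [abs_neg, abs_of_nonneg (by positivity : (0:ℤ) ≤ (n:ℤ))]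
  omega

lemma step_sum (n : ℕ) (hn : 1 ≤ n) (z : ℝ) (M : ℕ) :
    ∑ j ∈ B n, p n (M + 1) j * g z j
      = (1 / z) * ∑ j ∈ B n, p n M j * g z j - g z (n : ℤ) * c n (M + 1) := by
  have hsplit : ∀ j ∈ B n, p n (M + 1) j * g z j
      = (p n M (j - 1) * g z j) / 2 + (p n M (j + 1) * g z j) / 2 := by
    intro j hj
    have hj' := mem_B.mp hj
    show step n (p n M) j * g z j = _
    rw [step, if_pos hj']
    ring
  rw [Finset.sum_congr rfl hsplit, Finset.sum_add_distrib, ← Finset.sum_div, ← Finset.sum_div]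
  have hA : ∑ j ∈ B n, p n M (j - 1) * g z j
      = ∑ i ∈ B n, p n M i * g z (i + 1) - p n M ((n : ℤ) - 1) * g z (n : ℤ) := by
    have h0 := sum_shift (fun j => p n M (j - 1) * g z j) (1 - (n : ℤ)) ((n : ℤ) - 1)
    simp only [add_sub_cancel_right] at h0
    rw [show (1 - (n : ℤ) - 1) = -(n : ℤ) by ring] at h0
    rw [show ((n : ℤ) - 1 - 1) = (n : ℤ) - 2 by ring] at h0
    rw [sum_boundary n hn (fun i => p n M i * g z (i + 1))] at h0
    rw [p_at_negn n hn M] at h0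
    rw [show ((n : ℤ) - 1 + 1) = (n : ℤ) by ring] at h0
    have h0' : ∑ j ∈ B n, p n M (j - 1) * g z j
        = ∑ i ∈ B n, p n M i * g z (i + 1) + 0 * g z (-(n : ℤ) + 1)
          - p n M ((n : ℤ) - 1) * g z (n : ℤ) := h0
    rw [h0']
    ring
  have hA' : ∑ j ∈ B n, p n M (j + 1) * g z j
      = ∑ i ∈ B n, p n M i * g z (i - 1) - p n M (1 - (n : ℤ)) * g z (n : ℤ) := by
    have h0 := sum_shift' (fun j => p n M (j + 1) * g z j) (1 - (n : ℤ)) ((n : ℤ) - 1)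
    simp only [sub_add_cancel] at h0
    rw [show (1 - (n : ℤ) + 1) = 2 - (n : ℤ) by ring] at h0
    rw [sum_boundary' n hn (fun i => p n M i * g z (i - 1))] at h0
    rw [p_at_n n hn M] at h0
    rw [show (1 - (n : ℤ) - 1) = -(n : ℤ) by ring, g_neg] at h0
    have h0' : ∑ j ∈ B n, p n M (j + 1) * g z j
        = ∑ i ∈ B n, p n M i * g z (i - 1) + 0 * g z ((n : ℤ) - 1)
          - p n M (1 - (n : ℤ)) * g z (n : ℤ) := h0
    rw [h0']
    ring
  have hrec : ∑ i ∈ B n, p n M i * g z (i + 1) + ∑ i ∈ B n, p n M i * g z (i - 1)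
      = 2 * (1 / z) * ∑ i ∈ B n, p n M i * g z i := by
    rw [← Finset.sum_add_distrib, Finset.mul_sum]
    apply Finset.sum_congr rfl
    intro i _
    rw [← mul_add, g_rec]
    ring
  have hc : c n (M + 1) = (p n M ((n : ℤ) - 1) + p n M (1 - (n : ℤ))) / 2 := rfl
  rw [hA, hA', hc]
  linarith [hrec]

noncomputable def V (n : ℕ) (z : ℝ) (M : ℕ) : ℝ :=
  z ^ M * ∑ j ∈ B n, p n M j * g z j

lemma V_zero (n : ℕ) (hn : 1 ≤ n) (z : ℝ) : V n z 0 = 1 := by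
  unfold V
  rw [pow_zero, one_mul]
  have h : ∀ j ∈ B n, p n 0 j * g z j = if j = 0 then g z j else 0 := by
    intro j _
    simp only [p]
    split <;> simp
  rw [Finset.sum_congr rfl h, Finset.sum_ite_eq' (B n) 0 (fun j => g z j)]
  have h0 : (0 : ℤ) ∈ B n := by
    rw [mem_B]
    simp
    omega
  rw [if_pos h0]
  simp [g]

lemma KI (n : ℕ) (hn : 1 ≤ n) (z : ℝ) (hz : z ≠ 0) (M : ℕ) :
    g z (n : ℤ) * (∑ m ∈ Finset.range (M + 1), c n m * z ^ m) = 1 - V n z M := by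
  induction M with
  | zero =>
    rw [Finset.sum_range_one, V_zero n hn z]
    simp [c]
  | succ M ih =>
    rw [Finset.sum_range_succ, mul_add, ih]
    have hV : V n z (M + 1) = V n z M - z ^ (M + 1) * (g z (n : ℤ) * c n (M + 1)) := by
      show z ^ (M + 1) * ∑ j ∈ B n, p n (M + 1) j * g z j = _
      rw [step_sum n hn z M, mul_sub]
      have : z ^ (M + 1) * ((1 / z) * ∑ j ∈ B n, p n M j * g z j)
          = z ^ M * ∑ j ∈ B n, p n M j * g z j := by
        rw [pow_succ]
        field_simp
      rw [this]
      show _ = z ^ M * ∑ j ∈ B n, p n M j * g z j - z ^ (M + 1) * (g z (n : ℤ) * c n (M + 1))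
      ring
    rw [hV]
    ring

lemma V_bound (n : ℕ) (hn : 1 ≤ n) (z : ℝ) (hz1 : |z| ≤ 1) (M : ℕ) :
    |V n z M| ≤ lam n ^ M * ∑ j ∈ B n, |g z j| := by
  have h1 : |V n z M| ≤ ∑ j ∈ B n, |p n M j * g z j| := by
    rw [V, abs_mul]
    calc |z ^ M| * |∑ j ∈ B n, p n M j * g z j|
        ≤ 1 * ∑ j ∈ B n, |p n M j * g z j| := by
          apply mul_le_mul
          · rw [abs_pow]
            exact pow_le_one₀ (abs_nonneg z) hz1
          · exact Finset.abs_sum_le_sum_abs _ _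
          · exact abs_nonneg _
          · norm_num
      _ = ∑ j ∈ B n, |p n M j * g z j| := one_mul _
  calc |V n z M| ≤ ∑ j ∈ B n, |p n M j * g z j| := h1
    _ ≤ ∑ j ∈ B n, lam n ^ M * |g z j| := by
        apply Finset.sum_le_sum
        intro j _
        rw [abs_mul, abs_of_nonneg (p_nonneg n M j)]
        exact mul_le_mul_of_nonneg_right (p_le_pow n hn M j) (abs_nonneg _)
    _ = lam n ^ M * ∑ j ∈ B n, |g z j| := by rw [Finset.mul_sum]

lemma V_tendsto (n : ℕ) (hn : 1 ≤ n) (z : ℝ) (hz1 : |z| ≤ 1) :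
    Filter.Tendsto (fun M => V n z M) Filter.atTop (nhds 0) := by
  apply squeeze_zero_norm (a := fun M => lam n ^ M * ∑ j ∈ B n, |g z j|)
  · intro M
    rw [Real.norm_eq_abs]
    exact V_bound n hn z hz1 M
  · have h := tendsto_pow_atTop_nhds_zero_of_lt_one (lam_nonneg n hn) (lam_lt_one n hn)
    have := h.mul_const (∑ j ∈ B n, |g z j|)
    simpa using this

lemma T_eval_one : ∀ j : ℤ, (T ℝ j).eval 1 = 1 := by
  intro j
  induction j using Polynomial.Chebyshev.induct with
  | zero => simp
  | one => simp
  | add_two k h1 h2 =>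
    rw [T_add_two]
    simp only [eval_sub, eval_mul, eval_ofNat, eval_X] at *
    rw [h1, h2]
    ring
  | neg_add_one k h1 h2 =>
    rw [show (-(k : ℤ) - 1) = (-(k : ℤ) + 1) - 2 by ring, T_sub_two]
    rw [show (-(k : ℤ) + 1 - 1) = -(k : ℤ) by ring]
    simp only [eval_sub, eval_mul, eval_ofNat, eval_X] at *
    rw [h1, h2]
    ring

lemma g_one (j : ℤ) : g 1 j = 1 := by
  unfold g
  norm_num

end Stmt2Aux

/-- For the Chebyshev polynomial `T n` (`n ≥ 1`), the function `z ↦ 1 / T n (1/z)`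
is the probability generating function of a random variable with values in the
positive integers: its power series has nonnegative coefficients, vanishing constant
term, converges for `|z| ≤ 1`, and its value at `z = 1` is `1`. -/
theorem stmt2 (n : ℕ) (hn : 1 ≤ n) :
    ∃ c : ℕ → ℝ, (∀ i, 0 ≤ c i) ∧ c 0 = 0 ∧ HasSum c 1 ∧
      ∀ z : ℝ, |z| ≤ 1 → z ≠ 0 →
        HasSum (fun i => c i * z ^ i) (1 / (T ℝ n).eval (1 / z)) := by
  have hg1 : ∀ M, ∑ m ∈ Finset.range (M + 1), Stmt2Aux.c n m = 1 - Stmt2Aux.V n 1 M := by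
    intro M
    have h := Stmt2Aux.KI n hn 1 one_ne_zero M
    rw [Stmt2Aux.g_one] at h
    simpa using h
  have hVnn : ∀ M, 0 ≤ Stmt2Aux.V n 1 M := by
    intro M
    unfold Stmt2Aux.V
    apply mul_nonneg (by positivity)
    apply Finset.sum_nonneg
    intro j _
    rw [Stmt2Aux.g_one]
    simpa using Stmt2Aux.p_nonneg n M j
  have hsummable : Summable (Stmt2Aux.c n) := by
    apply summable_of_sum_range_le (c := 1) (Stmt2Aux.c_nonneg n)
    intro M
    cases M with
    | zero => simp
    | succ K =>
      rw [hg1 K]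
      linarith [hVnn K]
  have hlim : Filter.Tendsto (fun M => ∑ m ∈ Finset.range (M + 1), Stmt2Aux.c n m)
      Filter.atTop (nhds 1) := by
    have hV := Stmt2Aux.V_tendsto n hn 1 (by norm_num)
    have h2 : Filter.Tendsto (fun M => 1 - Stmt2Aux.V n 1 M) Filter.atTop (nhds (1 - 0)) :=
      Filter.Tendsto.sub tendsto_const_nhds hV
    simp only [sub_zero] at h2
    exact h2.congr (fun M => (hg1 M).symm)
  have hS0 := hsummable.hasSum
  have h2 : Filter.Tendsto (fun M => ∑ m ∈ Finset.range (M + 1), Stmt2Aux.c n m)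
      Filter.atTop (nhds (∑' m, Stmt2Aux.c n m)) :=
    hS0.tendsto_sum_nat.comp (Filter.tendsto_add_atTop_nat 1)
  have htsum : (∑' m, Stmt2Aux.c n m) = 1 := tendsto_nhds_unique h2 hlim
  have hcsum : HasSum (Stmt2Aux.c n) 1 := htsum ▸ hS0
  refine ⟨Stmt2Aux.c n, Stmt2Aux.c_nonneg n, rfl, hcsum, ?_⟩
  intro z hz1 hz
  have habs : Summable (fun m => |Stmt2Aux.c n m * z ^ m|) := by
    apply Summable.of_nonneg_of_le (fun m => abs_nonneg _) (fun m => ?_) hcsum.summable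
    rw [abs_mul, abs_pow, abs_of_nonneg (Stmt2Aux.c_nonneg n m)]
    exact mul_le_of_le_one_right (Stmt2Aux.c_nonneg n m) (pow_le_one₀ (abs_nonneg z) hz1)
  have hsum : Summable (fun m => Stmt2Aux.c n m * z ^ m) := habs.of_abs
  have hS : HasSum (fun m => Stmt2Aux.c n m * z ^ m) (∑' m, Stmt2Aux.c n m * z ^ m) :=
    hsum.hasSum
  have htend : Filter.Tendsto (fun M => ∑ m ∈ Finset.range (M + 1), Stmt2Aux.c n m * z ^ m)
      Filter.atTop (nhds (∑' m, Stmt2Aux.c n m * z ^ m)) :=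
    hS.tendsto_sum_nat.comp (Filter.tendsto_add_atTop_nat 1)
  have h1 : Filter.Tendsto (fun M => 1 - Stmt2Aux.V n z M) Filter.atTop
      (nhds (Stmt2Aux.g z (n : ℤ) * ∑' m, Stmt2Aux.c n m * z ^ m)) := by
    have := htend.const_mul (Stmt2Aux.g z (n : ℤ))
    exact this.congr (fun M => Stmt2Aux.KI n hn z hz M)
  have h2' : Filter.Tendsto (fun M => 1 - Stmt2Aux.V n z M) Filter.atTop (nhds 1) := by
    have hV := Stmt2Aux.V_tendsto n hn z hz1
    have h3 : Filter.Tendsto (fun M => 1 - Stmt2Aux.V n z M) Filter.atTop (nhds (1 - 0)) :=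
      Filter.Tendsto.sub tendsto_const_nhds hV
    simpa using h3
  have hprod : Stmt2Aux.g z (n : ℤ) * (∑' m, Stmt2Aux.c n m * z ^ m) = 1 :=
    tendsto_nhds_unique h1 h2'
  have hLval : (∑' m, Stmt2Aux.c n m * z ^ m) = 1 / Stmt2Aux.g z (n : ℤ) :=
    eq_one_div_of_mul_eq_one_right hprod
  have hfin : (1 : ℝ) / (T ℝ (n : ℤ)).eval (1 / z) = ∑' m, Stmt2Aux.c n m * z ^ m := by
    rw [hLval]
    rfl
  rw [hfin]
  exact hS
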